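/- For every k ≥ 1, the polynomial P_k has degree exactly k, all of its coefficients are nonnegative, its constant coefficient is 0, its coefficient of x is 2k, and for k ≥ 2 its coefficient of x² is 3k(k−1). -/

import Mathlib

private lemma coeff_mul_nonneg' {p q : Polynomial ℝ} (hp : ∀ n, 0 ≤ p.coeff n)
    (hq : ∀ n, 0 ≤ q.coeff n) : ∀ n, 0 ≤ (p * q).coeff n := by
  intro n
  rw [Polynomial.coeff_mul]
  exact Finset.sum_nonneg fun x _ => mul_nonneg (hp _) (hq _)

private lemma coeff_mul_one' (p q : Polynomial ℝ) :
    (p * q).coeff 1 = p.coeff 0 * q.coeff 1 + p.coeff 1 * q.coeff 0 := by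
  rw [Polynomial.coeff_mul, show Finset.HasAntidiagonal.antidiagonal 1 = {(0,1),(1,0)} from rfl]
  simp

private lemma sum_aux' : ∀ k : ℕ, 2 ≤ k →
    (∑ l ∈ Finset.Icc 2 k, ((l - 1 : ℕ) : ℝ)) = k * (k - 1) / 2 := by
  intro k hk
  induction k, hk using Nat.le_induction with
  | base => norm_num
  | succ k hk ih =>
    rw [Finset.sum_Icc_succ_top (by omega : 2 ≤ k + 1), ih]
    push_cast
    ring

/-- for `k ≥ 1`, `P k` has degree exactly `k`, nonnegative coefficients,
zero constant coefficient, coefficient `2k` of `x`, and (for `k ≥ 2`) coefficient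
`3k(k-1)` of `x²`. -/
theorem P_degree_and_coefficients
    (P : ℕ → Polynomial ℝ)
    (hP0 : P 0 = 0)
    (hP1 : P 1 = Polynomial.C 2 * Polynomial.X)
    (hPk : ∀ k, 2 ≤ k → P k =
      Polynomial.C (2 * (k : ℝ)) * Polynomial.X
        + ∑ l ∈ Finset.Icc 2 k, Polynomial.C 3 * Polynomial.X * P (l - 1)
        + ∑ l ∈ Finset.Icc 2 (k - 1), Polynomial.X * P (l - 1) * P (k - l)) :
    ∀ k, 1 ≤ k →
      (P k).degree = k ∧
      (∀ n, 0 ≤ (P k).coeff n) ∧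
      (P k).coeff 0 = 0 ∧
      (P k).coeff 1 = 2 * k ∧
      (2 ≤ k → (P k).coeff 2 = 3 * k * (k - 1)) := by
  intro k
  induction k using Nat.strong_induction_on with
  | _ k IH =>
    intro hk
    rcases eq_or_lt_of_le hk with h1 | hk2
    · -- k = 1
      subst h1
      refine ⟨?_, ?_, ?_, ?_, ?_⟩
      · rw [hP1]
        simpa using Polynomial.degree_C_mul_X (by norm_num : (2:ℝ) ≠ 0)
      · intro n
        rw [hP1]
        simp only [Polynomial.coeff_C_mul, Polynomial.coeff_X]
        split <;> norm_num
      · rw [hP1]; simp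
      · rw [hP1]; simp
      · omega
    · -- 2 ≤ k
      have hk2 : 2 ≤ k := hk2
      have key : ∀ m, 1 ≤ m → m < k →
          (P m).degree = m ∧ (∀ n, 0 ≤ (P m).coeff n) ∧ (P m).coeff 0 = 0 ∧
          (P m).coeff 1 = 2 * m ∧ (2 ≤ m → (P m).coeff 2 = 3 * m * (m - 1)) :=
        fun m h1 h2 => IH m h2 h1
      have hrec := hPk k hk2
      -- facts about elements of the two index sets
      have hB1 : ∀ l ∈ Finset.Icc 2 k, 1 ≤ l - 1 ∧ l - 1 < k := by
        intro l hl; rw [Finset.mem_Icc] at hl; omega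
      have hC1 : ∀ l ∈ Finset.Icc 2 (k - 1), (1 ≤ l - 1 ∧ l - 1 < k) ∧ (1 ≤ k - l ∧ k - l < k) := by
        intro l hl; rw [Finset.mem_Icc] at hl; omega
      -- nonnegativity of each part's coefficients
      have hAnn : ∀ n, 0 ≤ (Polynomial.C (2 * (k : ℝ)) * Polynomial.X).coeff n := by
        intro n
        simp only [Polynomial.coeff_C_mul, Polynomial.coeff_X]
        split <;> positivity
      have hBtermnn : ∀ l ∈ Finset.Icc 2 k, ∀ n,
          0 ≤ (Polynomial.C 3 * Polynomial.X * P (l - 1)).coeff n := by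
        intro l hl
        obtain ⟨h1, h2⟩ := hB1 l hl
        refine coeff_mul_nonneg' ?_ ((key _ h1 h2).2.1)
        intro n
        simp only [Polynomial.coeff_C_mul, Polynomial.coeff_X]
        split <;> norm_num
      have hBnn : ∀ n, 0 ≤ (∑ l ∈ Finset.Icc 2 k,
          Polynomial.C 3 * Polynomial.X * P (l - 1)).coeff n := by
        intro n
        rw [Polynomial.finset_sum_coeff]
        exact Finset.sum_nonneg fun l hl => hBtermnn l hl n
      have hCnn : ∀ n, 0 ≤ (∑ l ∈ Finset.Icc 2 (k - 1),
          Polynomial.X * P (l - 1) * P (k - l)).coeff n := by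
        intro n
        rw [Polynomial.finset_sum_coeff]
        refine Finset.sum_nonneg fun l hl => ?_
        obtain ⟨⟨h1, h2⟩, h3, h4⟩ := hC1 l hl
        refine coeff_mul_nonneg' (coeff_mul_nonneg' ?_ ((key _ h1 h2).2.1)) ((key _ h3 h4).2.1) _
        intro n
        simp only [Polynomial.coeff_X]
        split <;> norm_num
      have hnn : ∀ n, 0 ≤ (P k).coeff n := by
        intro n
        rw [hrec]
        simp only [Polynomial.coeff_add]
        exact add_nonneg (add_nonneg (hAnn n) (hBnn n)) (hCnn n)
      -- degree bound
      have hdegle : (P k).degree ≤ k := by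
        rw [hrec]
        refine (Polynomial.degree_add_le _ _).trans (max_le
          ((Polynomial.degree_add_le _ _).trans (max_le ?_ ?_)) ?_)
        · refine (Polynomial.degree_C_mul_X_le _).trans ?_
          exact_mod_cast by omega
        · refine (Polynomial.degree_sum_le _ _).trans (Finset.sup_le fun l hl => ?_)
          obtain ⟨h1, h2⟩ := hB1 l hl
          rw [Finset.mem_Icc] at hl
          rw [Polynomial.degree_mul, Polynomial.degree_C_mul_X (by norm_num : (3:ℝ) ≠ 0),
            (key _ h1 h2).1]
          have : (1 : WithBot ℕ) + ((l - 1 : ℕ) : WithBot ℕ) = ((1 + (l-1) : ℕ) : WithBot ℕ) := by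
            push_cast; ring
          rw [this]
          exact_mod_cast by omega
        · refine (Polynomial.degree_sum_le _ _).trans (Finset.sup_le fun l hl => ?_)
          obtain ⟨⟨h1, h2⟩, h3, h4⟩ := hC1 l hl
          rw [Finset.mem_Icc] at hl
          rw [Polynomial.degree_mul, Polynomial.degree_mul, Polynomial.degree_X,
            (key _ h1 h2).1, (key _ h3 h4).1]
          have : (1 : WithBot ℕ) + ((l - 1 : ℕ) : WithBot ℕ) + ((k - l : ℕ) : WithBot ℕ)
              = ((1 + (l-1) + (k-l) : ℕ) : WithBot ℕ) := by push_cast; ring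
          rw [this]
          exact_mod_cast by omega
      -- coefficient k is positive
      have hcoeffk : 0 < (P k).coeff k := by
        have hkm : 1 ≤ k - 1 ∧ k - 1 < k := by omega
        have hlead : 0 < (P (k - 1)).coeff (k - 1) :=
          lt_of_le_of_ne ((key _ hkm.1 hkm.2).2.1 _)
            (Ne.symm (Polynomial.coeff_ne_zero_of_eq_degree (key _ hkm.1 hkm.2).1))
        have hterm : (Polynomial.C 3 * Polynomial.X * P (k - 1)).coeff k
            = 3 * (P (k - 1)).coeff (k - 1) := by
          obtain ⟨m, rfl⟩ : ∃ m, k = m + 1 := ⟨k - 1, by omega⟩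
          simp only [Nat.add_sub_cancel]
          rw [mul_assoc, Polynomial.coeff_C_mul, Polynomial.coeff_X_mul]
        have hBpos : 0 < (∑ l ∈ Finset.Icc 2 k,
            Polynomial.C 3 * Polynomial.X * P (l - 1)).coeff k := by
          rw [Polynomial.finset_sum_coeff]
          have hmem : k ∈ Finset.Icc 2 k := by rw [Finset.mem_Icc]; omega
          calc (0:ℝ) < (Polynomial.C 3 * Polynomial.X * P (k - 1)).coeff k := by
                rw [hterm]; positivity
            _ ≤ _ := Finset.single_le_sum (fun l hl => hBtermnn l hl k) hmem
        rw [hrec]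
        simp only [Polynomial.coeff_add]
        have := hAnn k
        have := hCnn k
        linarith
      have hdeg : (P k).degree = k :=
        le_antisymm hdegle (Polynomial.le_degree_of_ne_zero (ne_of_gt hcoeffk))
      -- coeff 0
      have hc0 : (P k).coeff 0 = 0 := by
        rw [hrec]
        simp only [Polynomial.coeff_add, Polynomial.finset_sum_coeff,
          Polynomial.mul_coeff_zero, Polynomial.coeff_X_zero]
        simp
      -- coeff 1
      have hc1 : (P k).coeff 1 = 2 * k := by
        rw [hrec]
        simp only [Polynomial.coeff_add, Polynomial.finset_sum_coeff]
        have e1 : (Polynomial.C (2 * (k : ℝ)) * Polynomial.X).coeff 1 = 2 * (k : ℝ) := by simp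
        have e2 : ∀ l ∈ Finset.Icc 2 k,
            (Polynomial.C 3 * Polynomial.X * P (l - 1)).coeff 1 = 0 := by
          intro l hl
          obtain ⟨h1, h2⟩ := hB1 l hl
          have hx : (Polynomial.X * P (l - 1)).coeff 1 = (P (l - 1)).coeff 0 :=
            Polynomial.coeff_X_mul _ 0
          rw [mul_assoc, Polynomial.coeff_C_mul, hx, (key _ h1 h2).2.2.1, mul_zero]
        have e3 : ∀ l ∈ Finset.Icc 2 (k - 1),
            (Polynomial.X * P (l - 1) * P (k - l)).coeff 1 = 0 := by
          intro l hl
          obtain ⟨⟨h1, h2⟩, h3, h4⟩ := hC1 l hl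
          have hx : (Polynomial.X * (P (l - 1) * P (k - l))).coeff 1
              = (P (l - 1) * P (k - l)).coeff 0 := Polynomial.coeff_X_mul _ 0
          rw [mul_assoc, hx, Polynomial.mul_coeff_zero, (key _ h1 h2).2.2.1, zero_mul]
        rw [e1, Finset.sum_eq_zero e2, Finset.sum_eq_zero e3, add_zero, add_zero]
      -- coeff 2
      have hc2 : (P k).coeff 2 = 3 * k * ((k : ℝ) - 1) := by
        rw [hrec]
        simp only [Polynomial.coeff_add, Polynomial.finset_sum_coeff]
        have e1 : (Polynomial.C (2 * (k : ℝ)) * Polynomial.X).coeff 2 = 0 := by simp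
        have e2 : ∀ l ∈ Finset.Icc 2 k,
            (Polynomial.C 3 * Polynomial.X * P (l - 1)).coeff 2 = 6 * ((l - 1 : ℕ) : ℝ) := by
          intro l hl
          obtain ⟨h1, h2⟩ := hB1 l hl
          have hx : (Polynomial.X * P (l - 1)).coeff 2 = (P (l - 1)).coeff 1 :=
            Polynomial.coeff_X_mul _ 1
          rw [mul_assoc, Polynomial.coeff_C_mul, hx, (key _ h1 h2).2.2.2.1]
          ring
        have e3 : ∀ l ∈ Finset.Icc 2 (k - 1),
            (Polynomial.X * P (l - 1) * P (k - l)).coeff 2 = 0 := by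
          intro l hl
          obtain ⟨⟨h1, h2⟩, h3, h4⟩ := hC1 l hl
          have hx : (Polynomial.X * (P (l - 1) * P (k - l))).coeff 2
              = (P (l - 1) * P (k - l)).coeff 1 := Polynomial.coeff_X_mul _ 1
          rw [mul_assoc, hx, coeff_mul_one', (key _ h1 h2).2.2.1, (key _ h3 h4).2.2.1]
          ring
        rw [e1, Finset.sum_congr rfl e2, Finset.sum_eq_zero e3, ← Finset.mul_sum,
          sum_aux' k hk2]
        ring
      exact ⟨hdeg, hnn, hc0, hc1, fun _ => hc2⟩
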